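/- In ℝ², let R_θ denote counterclockwise rotation by θ. Let Γ = {(x, (√3/2)R_{-π/2}x, (√3/2)R_{-π/2}x) : x ∈ ℝ²} ⊆ (ℝ²)³. Then Γ is c-monotone for c(x₁,x₂,x₃) = ⟨x₁,x₂⟩+⟨x₂,x₃⟩+⟨x₃,x₁⟩, indeed maximally c-monotone, and the induced linear map A₁ = √3·R_{-π/2} is not 3-cyclically monotone; consequently Γ is not a c-splitting set. -/

import Mathlib

open scoped BigOperators

noncomputable section

/-- The Euclidean inner product on `ℝ²`. -/
def ip (x y : Fin 2 → ℝ) : ℝ := x 0 * y 0 + x 1 * y 1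

/-- Counterclockwise rotation by `-π/2` in `ℝ²`: `(a, b) ↦ (b, -a)`. -/
def Rneg (x : Fin 2 → ℝ) : Fin 2 → ℝ := ![x 1, -x 0]

/-- The cost `c(x₁,x₂,x₃) = ⟨x₁,x₂⟩ + ⟨x₂,x₃⟩ + ⟨x₃,x₁⟩` on `(ℝ²)³`. -/
def cost3 (x : Fin 3 → Fin 2 → ℝ) : ℝ :=
  ip (x 0) (x 1) + ip (x 1) (x 2) + ip (x 2) (x 0)

/-- `Γ ⊆ (ℝ²)³` is `c`-monotone. -/
def CMono3 (Γ : Set (Fin 3 → Fin 2 → ℝ)) : Prop :=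
  ∀ u ∈ Γ, ∀ v ∈ Γ, ∀ K : Finset (Fin 3), K.Nonempty → K ≠ Finset.univ →
    0 ≤ ip (∑ i ∈ K, (u i - v i)) (∑ i ∈ Kᶜ, (u i - v i))

/-- The set `Γ = {(x, (√3/2)R_{-π/2}x, (√3/2)R_{-π/2}x) : x ∈ ℝ²}`. -/
def Γrot : Set (Fin 3 → Fin 2 → ℝ) :=
  {p | ∃ x : Fin 2 → ℝ,
    p 0 = x ∧ p 1 = (Real.sqrt 3 / 2) • Rneg x ∧ p 2 = (Real.sqrt 3 / 2) • Rneg x}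

lemma hs2 : (Real.sqrt 3 / 2)^2 = 3/4 := by
  rw [div_pow, Real.sq_sqrt] <;> norm_num

lemma sqrt3_pos : (0:ℝ) < Real.sqrt 3 := Real.sqrt_pos.mpr (by norm_num)

lemma affine_nonneg {C α β : ℝ} (H : ∀ p q : ℝ, 0 ≤ C + p*α + q*β) : α = 0 ∧ β = 0 := by
  by_contra hc
  have hne : α ≠ 0 ∨ β ≠ 0 := by tauto
  have hpos : 0 < α^2 + β^2 := by
    rcases hne with h | h
    · positivity
    · positivity
  have ht := H (-((|C|+1)/(α^2+β^2))*α) (-((|C|+1)/(α^2+β^2))*β)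
  have habs : C ≤ |C| := le_abs_self C
  have : -((|C|+1)/(α^2+β^2))*α*α + -((|C|+1)/(α^2+β^2))*β*β = -(|C|+1) := by
    field_simp; ring
  linarith

lemma ereal_sum3 {a b c : EReal} {r : ℝ} (h : a + b + c = (r:EReal)) :
    ∃ x y z : ℝ, a = (x:EReal) ∧ b = (y:EReal) ∧ c = (z:EReal) := by
  induction a using EReal.rec <;> induction b using EReal.rec <;> induction c using EReal.rec <;>
    simp_all

lemma part1 : CMono3 Γrot := by
  rintro u ⟨x, hu0, hu1, hu2⟩ v ⟨y, hv0, hv1, hv2⟩ K hK hKne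
  have h34 := hs2
  fin_cases K
  all_goals try (exact absurd (by decide) hKne)
  all_goals
    simp_all [ip, Rneg, Finset.compl_eq_univ_sdiff,
      Finset.sum_sdiff_eq_sub (Finset.subset_univ _), Fin.sum_univ_three]
  all_goals nlinarith [sq_nonneg (x 0 - y 0), sq_nonneg (x 1 - y 1)]

lemma part2 : ∀ u : Fin 3 → Fin 2 → ℝ, CMono3 (Γrot ∪ {u}) → u ∈ Γrot := by
  intro u h
  have h34 := hs2
  set s := Real.sqrt 3 / 2 with hsdef
  set a0 := u 0 0; set a1 := u 0 1
  set b0 := u 1 0; set b1 := u 1 1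
  set c0 := u 2 0; set c1 := u 2 1
  have hu : u ∈ Γrot ∪ {u} := Or.inr rfl
  have hmem : ∀ y : Fin 2 → ℝ, (![y, s • Rneg y, s • Rneg y]) ∈ Γrot ∪ {u} :=
    fun y => Or.inl ⟨y, rfl, rfl, rfl⟩
  have H0 : ∀ p q : ℝ,
      0 ≤ (a0*b0 + a0*c0 + a1*b1 + a1*c1) + p*(2*s*a1 - (b0+c0)) + q*(-(2*s*a0) - (b1+c1)) := by
    intro p q
    have T := h u hu _ (hmem ![p,q]) {0} (by simp) (by decide)
    simp only [ip, Rneg, Finset.compl_eq_univ_sdiff,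
      Finset.sum_sdiff_eq_sub (Finset.subset_univ _), Fin.sum_univ_three, Finset.sum_singleton,
      Pi.smul_apply, smul_eq_mul, Pi.sub_apply, Pi.add_apply, Matrix.cons_val_zero,
      Matrix.cons_val_one, Matrix.head_cons, Matrix.cons_val_two, Matrix.tail_cons] at T
    linarith [T]
  obtain ⟨hα, hβ⟩ := affine_nonneg H0
  have hc0 : c0 = 2*s*a1 - b0 := by linarith
  have hc1 : c1 = -(2*s*a0) - b1 := by linarith
  set e0 := b0 - s*a1 with he0
  set e1 := b1 + s*a0 with he1
  have H1 : ∀ p q : ℝ,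
      0 ≤ (b0 - s*q) * (a0 + c0 - p - s*q) + (b1 + s*p) * (a1 + c1 - q + s*p) := by
    intro p q
    have T := h u hu _ (hmem ![p,q]) {1} (by simp) (by decide)
    simp only [ip, Rneg, Finset.compl_eq_univ_sdiff,
      Finset.sum_sdiff_eq_sub (Finset.subset_univ _), Fin.sum_univ_three, Finset.sum_singleton,
      Pi.smul_apply, smul_eq_mul, Pi.sub_apply, Pi.add_apply, Matrix.cons_val_zero,
      Matrix.cons_val_one, Matrix.head_cons, Matrix.cons_val_two, Matrix.tail_cons] at T
    linarith [T]
  have Hspec := H1 (a0 + (2/3)*e0) (a1 + (2/3)*e1)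
  rw [hc0, hc1] at Hspec
  have hkey : (b0 - s*(a1 + (2/3)*e1)) * (a0 + (2*s*a1 - b0) - (a0 + (2/3)*e0) - s*(a1 + (2/3)*e1))
      + (b1 + s*(a0 + (2/3)*e0)) * (a1 + (-(2*s*a0) - b1) - (a1 + (2/3)*e1) + s*(a0 + (2/3)*e0))
      = -(4/3)*(e0^2 + e1^2) := by
    rw [he0, he1]
    linear_combination (4/9*((b0 - s*a1)^2 + (b1 + s*a0)^2)) * h34
  rw [hkey] at Hspec
  have hE0 : e0 = 0 := by nlinarith [sq_nonneg e0, sq_nonneg e1]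
  have hE1 : e1 = 0 := by nlinarith [sq_nonneg e0, sq_nonneg e1]
  refine ⟨u 0, rfl, ?_, ?_⟩ <;> funext i <;> fin_cases i <;>
    simp only [Rneg, Pi.smul_apply, smul_eq_mul, Matrix.cons_val_zero, Matrix.cons_val_one,
      Matrix.head_cons] <;>
    [skip; skip; skip; skip]
  · show b0 = s * a1; linarith [hE0]
  · show b1 = s * -a0; linarith [hE1]
  · show c0 = s * a1; linarith [hE0]
  · show c1 = s * -a0; linarith [hE1]

lemma part3 : ¬(∀ a₁ a₂ a₃ : Fin 2 → ℝ,
    ip (a₂ - a₁) (Real.sqrt 3 • Rneg a₁) + ip (a₃ - a₂) (Real.sqrt 3 • Rneg a₂) +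
      ip (a₁ - a₃) (Real.sqrt 3 • Rneg a₃) ≤ 0) := by
  intro h
  have := h ![1,0] ![0,-1] ![-1,0]
  simp [ip, Rneg] at this
  nlinarith [sqrt3_pos]

lemma part4 : ¬∃ u : Fin 3 → (Fin 2 → ℝ) → EReal,
    (∀ x : Fin 3 → Fin 2 → ℝ, ((cost3 x : ℝ) : EReal) ≤ ∑ i, u i (x i)) ∧
    (∀ x ∈ Γrot, ((cost3 x : ℝ) : EReal) = ∑ i, u i (x i)) := by
  rintro ⟨u, hle, heq⟩
  set s := Real.sqrt 3 / 2 with hsdef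
  have h34 : s^2 = 3/4 := by rw [hsdef]; exact hs2
  have hspos : 0 < s := by rw [hsdef]; positivity
  set y1 : Fin 2 → ℝ := ![1,0]
  set y2 : Fin 2 → ℝ := ![-1,0]
  set y3 : Fin 2 → ℝ := ![0,-1]
  set P : (Fin 2 → ℝ) → (Fin 3 → Fin 2 → ℝ) := fun y => ![y, s • Rneg y, s • Rneg y]
  have hP : ∀ y, P y ∈ Γrot := fun y => ⟨y, rfl, rfl, rfl⟩
  set M : (Fin 2 → ℝ) → (Fin 2 → ℝ) → (Fin 3 → Fin 2 → ℝ) :=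
    fun y z => ![y, s • Rneg z, s • Rneg z]
  have e1 := heq _ (hP y1)
  have e2 := heq _ (hP y2)
  have e3 := heq _ (hP y3)
  simp only [Fin.sum_univ_three] at e1 e2 e3
  obtain ⟨A1, B1, C1, hA1, hB1, hC1⟩ := ereal_sum3 e1.symm
  obtain ⟨A2, B2, C2, hA2, hB2, hC2⟩ := ereal_sum3 e2.symm
  obtain ⟨A3, B3, C3, hA3, hB3, hC3⟩ := ereal_sum3 e3.symm
  have l1 := hle (M y1 y2)
  have l2 := hle (M y2 y3)
  have l3 := hle (M y3 y1)
  simp only [Fin.sum_univ_three] at l1 l2 l3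
  have hM0 : ∀ y z : Fin 2 → ℝ, M y z 0 = y := fun y z => rfl
  have hM1 : ∀ y z : Fin 2 → ℝ, M y z 1 = s • Rneg z := fun y z => rfl
  have hM2 : ∀ y z : Fin 2 → ℝ, M y z 2 = s • Rneg z := fun y z => rfl
  have hP0 : ∀ y : Fin 2 → ℝ, P y 0 = y := fun y => rfl
  have hP1 : ∀ y : Fin 2 → ℝ, P y 1 = s • Rneg y := fun y => rfl
  have hP2 : ∀ y : Fin 2 → ℝ, P y 2 = s • Rneg y := fun y => rfl
  simp only [hP0, hP1, hP2] at e1 e2 e3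
  simp only [hM0, hM1, hM2] at l1 l2 l3
  simp only [hP0, hP1, hP2] at hA1 hB1 hC1 hA2 hB2 hC2 hA3 hB3 hC3
  rw [hA1, hB2, hC2] at l1
  rw [hA2, hB3, hC3] at l2
  rw [hA3, hB1, hC1] at l3
  rw [hA1, hB1, hC1] at e1
  rw [hA2, hB2, hC2] at e2
  rw [hA3, hB3, hC3] at e3
  rw [← EReal.coe_add, ← EReal.coe_add, EReal.coe_le_coe_iff] at l1 l2 l3
  rw [← EReal.coe_add, ← EReal.coe_add, EReal.coe_eq_coe_iff] at e1 e2 e3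
  have c1 : cost3 (M y1 y2) = s^2 := by
    simp only [cost3, ip, Rneg, M, P, y1, y2, y3, Matrix.cons_val_zero, Matrix.cons_val_one,
      Matrix.head_cons, Pi.smul_apply, smul_eq_mul, Matrix.cons_val_fin_one, Matrix.cons_val_two,
      Matrix.tail_cons]
    ring
  have c2 : cost3 (M y2 y3) = 2*s + s^2 := by
    simp only [cost3, ip, Rneg, M, P, y1, y2, y3, Matrix.cons_val_zero, Matrix.cons_val_one,
      Matrix.head_cons, Pi.smul_apply, smul_eq_mul, Matrix.cons_val_fin_one, Matrix.cons_val_two,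
      Matrix.tail_cons]
    ring
  have c3 : cost3 (M y3 y1) = 2*s + s^2 := by
    simp only [cost3, ip, Rneg, M, P, y1, y2, y3, Matrix.cons_val_zero, Matrix.cons_val_one,
      Matrix.head_cons, Pi.smul_apply, smul_eq_mul, Matrix.cons_val_fin_one, Matrix.cons_val_two,
      Matrix.tail_cons]
    ring
  have d1 : cost3 (P y1) = s^2 := by
    simp only [cost3, ip, Rneg, M, P, y1, y2, y3, Matrix.cons_val_zero, Matrix.cons_val_one,
      Matrix.head_cons, Pi.smul_apply, smul_eq_mul, Matrix.cons_val_fin_one, Matrix.cons_val_two,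
      Matrix.tail_cons]
    ring
  have d2 : cost3 (P y2) = s^2 := by
    simp only [cost3, ip, Rneg, M, P, y1, y2, y3, Matrix.cons_val_zero, Matrix.cons_val_one,
      Matrix.head_cons, Pi.smul_apply, smul_eq_mul, Matrix.cons_val_fin_one, Matrix.cons_val_two,
      Matrix.tail_cons]
    ring
  have d3 : cost3 (P y3) = s^2 := by
    simp only [cost3, ip, Rneg, M, P, y1, y2, y3, Matrix.cons_val_zero, Matrix.cons_val_one,
      Matrix.head_cons, Pi.smul_apply, smul_eq_mul, Matrix.cons_val_fin_one, Matrix.cons_val_two,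
      Matrix.tail_cons]
    ring
  rw [c1] at l1; rw [c2] at l2; rw [c3] at l3
  rw [d1] at e1; rw [d2] at e2; rw [d3] at e3
  linarith

/-- `Γrot` is (maximally) `c`-monotone, the induced map `A₁ = √3 R_{-π/2}` is not
`3`-cyclically monotone, and consequently `Γrot` is not a `c`-splitting set. -/
theorem rotation_example :
    CMono3 Γrot ∧
    (∀ u : Fin 3 → Fin 2 → ℝ, CMono3 (Γrot ∪ {u}) → u ∈ Γrot) ∧
    ¬(∀ a₁ a₂ a₃ : Fin 2 → ℝ,
        ip (a₂ - a₁) (Real.sqrt 3 • Rneg a₁) + ip (a₃ - a₂) (Real.sqrt 3 • Rneg a₂) +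
          ip (a₁ - a₃) (Real.sqrt 3 • Rneg a₃) ≤ 0) ∧
    ¬∃ u : Fin 3 → (Fin 2 → ℝ) → EReal,
        (∀ x : Fin 3 → Fin 2 → ℝ, ((cost3 x : ℝ) : EReal) ≤ ∑ i, u i (x i)) ∧
        (∀ x ∈ Γrot, ((cost3 x : ℝ) : EReal) = ∑ i, u i (x i)) := by
  exact ⟨part1, part2, part3, part4⟩
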